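/- The trivariate chromatic polynomial encodes the degree sequence: if G¹ = (V¹, E¹) and G² = (V², E²) are finite simple graphs such that P̃(G¹, x, y, z) = P̃(G², x, y, z) for all natural numbers x, y with y ≤ x and all integers z, then for every natural number i the number of vertices of degree i in G¹ equals the number of vertices of degree i in G². -/

import Mathlib

open Finset

/-- The edge set of a simple graph on a finite vertex type, as a `Finset`. -/
noncomputable def edgeFinset' {α : Type*} [Fintype α] (G : SimpleGraph α) :
    Finset (Sym2 α) :=
  (Set.toFinite G.edgeSet).toFinset

/-- The number of connected components of a graph. -/
noncomputable def ncomp {α : Type*} (G : SimpleGraph α) : ℕ :=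
  Nat.card G.ConnectedComponent

/-- The Potts model `Z(G, x, y) = Σ_{A ⊆ E} x^{c(V,A)} y^{|A|}`, where `c(V,A)` is the
number of connected components of the spanning subgraph `(V, A)`. -/
noncomputable def potts {α : Type*} [Fintype α] {R : Type*} [CommRing R]
    (G : SimpleGraph α) (x y : R) : R :=
  ∑ A ∈ (edgeFinset' G).powerset,
    x ^ ncomp (SimpleGraph.fromEdgeSet (A : Set (Sym2 α))) * y ^ A.card

/-- The subgraph counting polynomial
`H(G, v, x, y) = Σ_{(W,F), W ⊆ V, F ⊆ E(G[W])} v^{|W|} x^{c(W,F)} y^{|F|}`,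
where `c(W,F)` is the number of connected components of the graph `(W, F)`. -/
noncomputable def scp {α : Type*} [Fintype α] {R : Type*} [CommRing R]
    (G : SimpleGraph α) (v x y : R) : R :=
  ∑ W : Finset α, ∑ F ∈ (edgeFinset' (G.induce (W : Set α))).powerset,
    v ^ W.card * x ^ ncomp (SimpleGraph.fromEdgeSet (F : Set (Sym2 (W : Set α)))) * y ^ F.card

/-- The subgraph component polynomial `Q(G, v, x) = Σ_{W ⊆ V} v^{|W|} x^{k(G[W])}`. -/
noncomputable def subgraphCompPoly {α : Type*} [Fintype α] {R : Type*} [CommRing R]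
    (G : SimpleGraph α) (v x : R) : R :=
  ∑ W : Finset α, v ^ W.card * x ^ ncomp (G.induce (W : Set α))

/-- The number of bad monochromatic edges of a coloring `φ : α → Fin x` (colors `1, …, x`
identified with `Fin x` via `c ↦ c + 1`): edges all of whose vertices get the same color
`c ≤ y`, i.e. `(c : ℕ) < y`. -/
noncomputable def badCount {α : Type*} {x : ℕ} (G : SimpleGraph α) (y : ℕ)
    (φ : α → Fin x) : ℕ :=
  {e ∈ G.edgeSet | ∃ c : Fin x, (c : ℕ) < y ∧ ∀ w ∈ e, φ w = c}.ncard

/-- The number of monochromatic edges of a coloring `φ : α → Fin x`. -/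
noncomputable def monoCount {α : Type*} {x : ℕ} (G : SimpleGraph α)
    (φ : α → Fin x) : ℕ :=
  {e ∈ G.edgeSet | ∃ c : Fin x, ∀ w ∈ e, φ w = c}.ncard

/-- The bad coloring polynomial `χ̃(G, x, z) = Σ_{φ : V → {1,…,x}} z^{m(φ)}`, where `m(φ)`
is the number of monochromatic edges of `φ`. -/
noncomputable def badChrom {α : Type*} [Fintype α] [DecidableEq α] {R : Type*} [CommRing R]
    (G : SimpleGraph α) (x : ℕ) (z : R) : R :=
  ∑ φ : α → Fin x, z ^ monoCount G φ

/-- The trivariate chromatic polynomial `P̃(G, x, y, z) = Σ_{φ : V → {1,…,x}} z^{b(φ)}`,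
where `b(φ)` is the number of bad monochromatic edges of `φ` (monochromatic in a color
`c ≤ y`). -/
noncomputable def triChrom {α : Type*} [Fintype α] [DecidableEq α] {R : Type*} [CommRing R]
    (G : SimpleGraph α) (x y : ℕ) (z : R) : R :=
  ∑ φ : α → Fin x, z ^ badCount G y φ

/-- The subgraph counting polynomial as a polynomial with integer coefficients in the
variables `v = X 0`, `x = X 1`, `y = X 2`. -/
noncomputable def scpPoly {α : Type*} [Fintype α] (G : SimpleGraph α) :
    MvPolynomial (Fin 3) ℤ :=
  scp G (MvPolynomial.X 0) (MvPolynomial.X 1) (MvPolynomial.X 2)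

noncomputable def eCount {α : Type*} (G : SimpleGraph α) (W : Finset α) : ℕ :=
  {e ∈ G.edgeSet | ∀ w ∈ e, w ∈ W}.ncard


lemma badCount_one {α : Type*} [Fintype α] [DecidableEq α] {t : ℕ} (G : SimpleGraph α)
    (φ : α → Fin (t+1)) :
    badCount G 1 φ = eCount G (univ.filter fun v => φ v = 0) := by
  unfold badCount eCount
  congr 1
  ext e
  simp only [Set.mem_setOf_eq, Finset.mem_filter, Finset.mem_univ, true_and, and_congr_right_iff]
  intro _
  constructor
  · rintro ⟨c, hc, hall⟩ w hw
    have : c = 0 := Fin.ext (by simp only [Fin.val_zero]; omega)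
    rw [hall w hw, this]
  · intro hall
    exact ⟨0, by simp only [Fin.val_zero]; omega, hall⟩

lemma fiber_card {α : Type*} [Fintype α] [DecidableEq α] (t : ℕ) (W : Finset α) :
    (univ.filter fun φ : α → Fin (t+1) => (univ.filter fun v => φ v = 0) = W).card
      = t ^ (Fintype.card α - W.card) := by
  have : (univ.filter fun φ : α → Fin (t+1) => (univ.filter fun v => φ v = 0) = W)
      = Fintype.piFinset (fun v : α => if v ∈ W then ({0} : Finset (Fin (t+1))) else {0}ᶜ) := by
    ext φ
    simp only [Finset.mem_filter, Finset.mem_univ, true_and, Fintype.mem_piFinset]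
    constructor
    · intro hW v
      subst hW
      split <;> simp_all
    · intro hv
      ext v
      have := hv v
      split at this <;> simp_all
  rw [this, Fintype.card_piFinset]
  have h2 : ∀ v : α, (if v ∈ W then ({0} : Finset (Fin (t+1))) else {0}ᶜ).card = if v ∈ W then 1 else t := by
    intro v; split <;> simp [Finset.card_compl]
  simp_rw [h2]
  rw [Finset.prod_ite, Finset.prod_const, Finset.prod_const, one_pow, one_mul,
    Finset.filter_not, Finset.card_sdiff_of_subset (by simp), Finset.filter_mem_eq_inter,
    Finset.univ_inter, Finset.card_univ]


lemma triChrom_one {α : Type*} [Fintype α] [DecidableEq α] (G : SimpleGraph α) (t : ℕ) (z : ℤ) :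
    triChrom G (t+1) 1 z
      = ∑ W : Finset α, (t : ℤ) ^ (Fintype.card α - W.card) * z ^ eCount G W := by
  unfold triChrom
  simp_rw [badCount_one G]
  have hcomp := Finset.sum_comp (s := (univ : Finset (α → Fin (t+1))))
    (fun W => z ^ eCount G W) (fun φ => univ.filter fun v => φ v = 0)
  rw [hcomp]
  rw [Finset.sum_subset (Finset.subset_univ _)]
  · refine Finset.sum_congr rfl fun W _ => ?_
    rw [fiber_card, nsmul_eq_mul]
    push_cast
    ring
  · intro W _ hW
    have : (univ.filter fun φ : α → Fin (t+1) => (univ.filter fun v => φ v = 0) = W) = ∅ := by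
      rw [Finset.filter_eq_empty_iff]
      intro φ _
      intro hc
      exact hW (Finset.mem_image.2 ⟨φ, Finset.mem_univ _, hc⟩)
    rw [this]
    simp

lemma triChrom_zero {α : Type*} [Fintype α] [DecidableEq α] (G : SimpleGraph α) (x : ℕ) (z : ℤ) :
    triChrom G x 0 z = (x : ℤ) ^ Fintype.card α := by
  unfold triChrom
  have : ∀ φ : α → Fin x, badCount G 0 φ = 0 := by
    intro φ
    unfold badCount
    have : {e ∈ G.edgeSet | ∃ c : Fin x, (c : ℕ) < 0 ∧ ∀ w ∈ e, φ w = c} = ∅ := by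
      ext e; simp
    rw [this, Set.ncard_empty]
  simp_rw [this, pow_zero, Finset.sum_const, Finset.card_univ, Fintype.card_fun,
    Fintype.card_fin, nsmul_eq_mul, mul_one]
  push_cast
  ring

noncomputable def pOf {α : Type*} [Fintype α] (G : SimpleGraph α) (z : ℤ) : Polynomial ℤ :=
  ∑ W : Finset α, Polynomial.C (z ^ eCount G W) * Polynomial.X ^ (Fintype.card α - W.card)

lemma pOf_eval {α : Type*} [Fintype α] [DecidableEq α] (G : SimpleGraph α) (z : ℤ) (t : ℕ) :
    (pOf G z).eval (t : ℤ) = triChrom G (t+1) 1 z := by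
  rw [triChrom_one]
  unfold pOf
  rw [Polynomial.eval_finset_sum]
  refine Finset.sum_congr rfl fun W _ => ?_
  simp [mul_comm]

lemma pOf_coeff {α : Type*} [Fintype α] (G : SimpleGraph α) (z : ℤ) (k : ℕ) :
    (pOf G z).coeff k
      = ∑ W : Finset α, if Fintype.card α - W.card = k then z ^ eCount G W else 0 := by
  unfold pOf
  rw [Polynomial.finset_sum_coeff]
  refine Finset.sum_congr rfl fun W _ => ?_
  rw [Polynomial.coeff_C_mul, Polynomial.coeff_X_pow]
  split <;> split <;> simp_all [eq_comm]

lemma pOf_coeff_zero {α : Type*} [Fintype α] (G : SimpleGraph α) (z : ℤ) :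
    (pOf G z).coeff 0 = z ^ eCount G Finset.univ := by
  rw [pOf_coeff]
  rw [Finset.sum_eq_single Finset.univ]
  · simp
  · intro W _ hW
    rw [if_neg]
    intro hc
    exact hW (Finset.card_eq_iff_eq_univ W |>.1 (by
      have := Finset.card_le_univ W
      omega))
  · simp

lemma pOf_coeff_one {α : Type*} [Fintype α] [DecidableEq α] [Nonempty α] (G : SimpleGraph α)
    (z : ℤ) :
    (pOf G z).coeff 1 = ∑ v : α, z ^ eCount G (univ.erase v) := by
  have hn : 1 ≤ Fintype.card α := Fintype.card_pos
  rw [pOf_coeff, ← Finset.sum_filter]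
  have himg : (univ.filter (fun W : Finset α => Fintype.card α - W.card = 1))
      = univ.image (fun v : α => univ.erase v) := by
    ext W
    simp only [Finset.mem_filter, Finset.mem_univ, true_and, Finset.mem_image]
    constructor
    · intro hW
      have hle := Finset.card_le_univ W
      have hcard : Wᶜ.card = 1 := by
        rw [Finset.card_compl]
        omega
      obtain ⟨v, hv⟩ := Finset.card_eq_one.1 hcard
      refine ⟨v, ?_⟩
      rw [← Finset.compl_singleton, ← hv, compl_compl]
    · rintro ⟨v, rfl⟩
      rw [Finset.card_erase_of_mem (Finset.mem_univ v), Finset.card_univ]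
      omega
  rw [himg, Finset.sum_image]
  intro a _ b _ hab
  by_contra hne
  have : a ∈ univ.erase b := Finset.mem_erase.2 ⟨hne, Finset.mem_univ a⟩
  rw [← show univ.erase a = univ.erase b from hab] at this
  exact (Finset.mem_erase.1 this).1 rfl

lemma eCount_univ {α : Type*} [Fintype α] [DecidableEq α] (G : SimpleGraph α)
    [DecidableRel G.Adj] : eCount G Finset.univ = G.edgeFinset.card := by
  unfold eCount
  rw [← Set.ncard_coe_finset, SimpleGraph.coe_edgeFinset]
  congr 1
  ext e
  simp

lemma eCount_erase {α : Type*} [Fintype α] [DecidableEq α] (G : SimpleGraph α)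
    [DecidableRel G.Adj] (v : α) :
    eCount G (univ.erase v) = G.edgeFinset.card - G.degree v := by
  unfold eCount
  have hset : {e ∈ G.edgeSet | ∀ w ∈ e, w ∈ univ.erase v} = G.edgeSet \ G.incidenceSet v := by
    ext e
    simp only [Set.mem_setOf_eq, Set.mem_diff, SimpleGraph.incidenceSet,
      Finset.mem_erase, Finset.mem_univ, and_true]
    constructor
    · rintro ⟨he, hall⟩
      exact ⟨he, fun hc => hall v hc.2 rfl⟩
    · rintro ⟨he, hni⟩
      exact ⟨he, fun w hw hc => hni ⟨he, hc ▸ hw⟩⟩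
  rw [hset, Set.ncard_diff (G.incidenceSet_subset v) (Set.Finite.subset (Set.toFinite _) (G.incidenceSet_subset v))]
  congr 1
  · rw [← Set.ncard_coe_finset, SimpleGraph.coe_edgeFinset]
  · rw [← SimpleGraph.card_incidenceFinset_eq_degree, ← Set.ncard_coe_finset]
    congr 1
    ext e
    rw [Finset.mem_coe, SimpleGraph.mem_incidenceFinset]

lemma degree_le {α : Type*} [Fintype α] [DecidableEq α] (G : SimpleGraph α)
    [DecidableRel G.Adj] (v : α) : G.degree v ≤ G.edgeFinset.card := by
  rw [← SimpleGraph.card_incidenceFinset_eq_degree]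
  apply Finset.card_le_card
  rw [SimpleGraph.incidenceFinset_eq_filter]
  exact Finset.filter_subset _ _

noncomputable def qOf {α : Type*} [Fintype α] [DecidableEq α] (G : SimpleGraph α) :
    Polynomial ℤ :=
  ∑ v : α, Polynomial.X ^ (eCount G (univ.erase v))

lemma qOf_eval {α : Type*} [Fintype α] [DecidableEq α] [Nonempty α] (G : SimpleGraph α)
    (z : ℤ) : (qOf G).eval z = (pOf G z).coeff 1 := by
  rw [pOf_coeff_one]
  unfold qOf
  rw [Polynomial.eval_finset_sum]
  simp

lemma qOf_coeff {α : Type*} [Fintype α] [DecidableEq α] (G : SimpleGraph α) (j : ℕ) :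
    (qOf G).coeff j = ((univ.filter fun v => eCount G (univ.erase v) = j).card : ℤ) := by
  unfold qOf
  rw [Polynomial.finset_sum_coeff]
  simp_rw [Polynomial.coeff_X_pow]
  rw [Finset.sum_boole]
  norm_cast
  congr 1
  exact Finset.filter_congr fun v _ => eq_comm

/-- The trivariate chromatic polynomial encodes the degree sequence. -/
theorem triChrom_encodes_degreeSequence {V₁ V₂ : Type*} [Fintype V₁] [DecidableEq V₁]
    [Fintype V₂] [DecidableEq V₂] (G₁ : SimpleGraph V₁) (G₂ : SimpleGraph V₂)
    [DecidableRel G₁.Adj] [DecidableRel G₂.Adj]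
    (h : ∀ x y : ℕ, y ≤ x → ∀ z : ℤ, triChrom G₁ x y z = triChrom G₂ x y z) (i : ℕ) :
    (Finset.univ.filter fun u : V₁ => G₁.degree u = i).card
      = (Finset.univ.filter fun u : V₂ => G₂.degree u = i).card := by
  -- Step 1: equal number of vertices
  have hn : Fintype.card V₁ = Fintype.card V₂ := by
    have h20 := h 2 0 (by norm_num) 0
    rw [triChrom_zero, triChrom_zero] at h20
    have h2n : (2:ℕ) ^ Fintype.card V₁ = 2 ^ Fintype.card V₂ := by exact_mod_cast h20
    exact Nat.pow_right_injective (le_refl 2) h2n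
  rcases Nat.eq_zero_or_pos (Fintype.card V₁) with hzero | hpos
  · have he₁ : IsEmpty V₁ := Fintype.card_eq_zero_iff.1 hzero
    have he₂ : IsEmpty V₂ := Fintype.card_eq_zero_iff.1 (hn ▸ hzero)
    simp [Finset.univ_eq_empty]
  have hne₁ : Nonempty V₁ := Fintype.card_pos_iff.1 hpos
  have hne₂ : Nonempty V₂ := Fintype.card_pos_iff.1 (hn ▸ hpos)
  -- Step 2: pOf equality
  have hp : ∀ z : ℤ, pOf G₁ z = pOf G₂ z := by
    intro z
    apply Polynomial.eq_of_infinite_eval_eq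
    have hinf : (Set.range ((↑) : ℕ → ℤ)).Infinite :=
      Set.infinite_range_of_injective (fun a b hab => by exact_mod_cast hab)
    apply hinf.mono
    rintro _ ⟨t, rfl⟩
    simp only [Set.mem_setOf_eq]
    rw [pOf_eval, pOf_eval]
    exact h (t+1) 1 (by omega) z
  -- Step 3: equal number of edges
  have hm : G₁.edgeFinset.card = G₂.edgeFinset.card := by
    have hc := congrArg (fun p => Polynomial.coeff p 0) (hp 2)
    rw [pOf_coeff_zero, pOf_coeff_zero, eCount_univ, eCount_univ] at hc
    have : (2:ℕ) ^ G₁.edgeFinset.card = 2 ^ G₂.edgeFinset.card := by exact_mod_cast hc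
    exact Nat.pow_right_injective (le_refl 2) this
  set m := G₁.edgeFinset.card with hmdef
  -- Step 4: qOf equality
  have hq : qOf G₁ = qOf G₂ := by
    apply Polynomial.funext
    intro z
    rw [qOf_eval, qOf_eval, hp z]
  rcases le_or_gt i m with him | him
  · -- use coefficient m - i
    have hc := congrArg (fun p => Polynomial.coeff p (m - i)) hq
    rw [qOf_coeff, qOf_coeff] at hc
    have hcard : (univ.filter fun v : V₁ => eCount G₁ (univ.erase v) = m - i).card
        = (univ.filter fun v : V₂ => eCount G₂ (univ.erase v) = m - i).card := by
      exact_mod_cast hc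
    have hf₁ : (univ.filter fun u : V₁ => G₁.degree u = i)
        = (univ.filter fun v : V₁ => eCount G₁ (univ.erase v) = m - i) := by
      apply Finset.filter_congr
      intro v _
      rw [eCount_erase]
      have := degree_le G₁ v
      constructor <;> (intro hx; omega)
    have hf₂ : (univ.filter fun u : V₂ => G₂.degree u = i)
        = (univ.filter fun v : V₂ => eCount G₂ (univ.erase v) = m - i) := by
      apply Finset.filter_congr
      intro v _
      rw [eCount_erase]
      have := degree_le G₂ v
      constructor <;> (intro hx; omega)
    rw [hf₁, hf₂, hcard]
  · -- both empty
    have hf₁ : (univ.filter fun u : V₁ => G₁.degree u = i) = ∅ := by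
      rw [Finset.filter_eq_empty_iff]
      intro v _
      have := degree_le G₁ v
      omega
    have hf₂ : (univ.filter fun u : V₂ => G₂.degree u = i) = ∅ := by
      rw [Finset.filter_eq_empty_iff]
      intro v _
      have := degree_le G₂ v
      omega
    rw [hf₁, hf₂, Finset.card_empty, Finset.card_empty]
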